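/- In the circular coin-removal game with gaps, for n ≥ 3, a circular arrangement of n coins is removable if and only if the number of heads-up coins is positive and even. -/

import Mathlib

/-- Flip the coin at position `j` of the cycle, if a coin is present there. -/
def cgFlip {n : ℕ} (f : Fin n → Option Bool) (j : Fin n) : Fin n → Option Bool :=
  Function.update f j ((f j).map (!·))

/-- One move in the circular coin-removal game with gaps: remove a heads-up
coin (leaving its position empty) and flip the coins, if present, in the two
adjacent positions of the cycle. -/
def cgStep {n : ℕ} [NeZero n] (f g : Fin n → Option Bool) : Prop :=
  ∃ i : Fin n, f i = some true ∧
    g = cgFlip (cgFlip (Function.update f i none) (i + 1)) (i - 1)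

/-- A circular arrangement is removable if all coins can be removed. -/
def cgRemovable {n : ℕ} [NeZero n] (f : Fin n → Option Bool) : Prop :=
  Relation.ReflTransGen cgStep f (fun _ => none)

namespace CG

open scoped Fin.NatCast Fin.CommRing

variable {n : ℕ} [NeZero n]

/-- the result of a move at `i` -/
def moveAt (f : Fin n → Option Bool) (i : Fin n) : Fin n → Option Bool :=
  cgFlip (cgFlip (Function.update f i none) (i + 1)) (i - 1)

lemma cgStep_moveAt {f : Fin n → Option Bool} {i : Fin n} (h : f i = some true) :
    cgStep f (moveAt f i) := ⟨i, h, rfl⟩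

lemma natCast_val_lt {p : ℕ} (hp : p < n) : ((p : Fin n) : ℕ) = p := by
  simp [Fin.val_natCast, Nat.mod_eq_of_lt hp]

lemma natCast_inj_lt {p q : ℕ} (hp : p < n) (hq : q < n) :
    (p : Fin n) = (q : Fin n) ↔ p = q := by
  constructor
  · intro h
    have := congrArg Fin.val h
    rwa [natCast_val_lt hp, natCast_val_lt hq] at this
  · rintro rfl; rfl

lemma addCast_inj (a : Fin n) {p q : ℕ} (hp : p < n) (hq : q < n) :
    a + (p : Fin n) = a + (q : Fin n) ↔ p = q := by
  rw [add_right_inj, natCast_inj_lt hp hq]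

lemma sub_one_eq (a : Fin n) : a - 1 = a + ((n - 1 : ℕ) : Fin n) := by
  have h1 : (1 : ℕ) ≤ n := Nat.one_le_iff_ne_zero.mpr (NeZero.ne n)
  have : ((n - 1 : ℕ) : Fin n) + 1 = 0 := by
    have : ((n - 1 : ℕ) : Fin n) + ((1:ℕ) : Fin n) = ((n - 1 + 1 : ℕ) : Fin n) := by
      push_cast; ring
    rw [Nat.cast_one] at this
    rw [this, Nat.sub_add_cancel h1, Fin.natCast_self]
  have h2 : ((n - 1 : ℕ) : Fin n) = -1 := by
    rw [eq_neg_iff_add_eq_zero]; exact this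
  rw [h2]; ring

lemma cgFlip_apply (f : Fin n → Option Bool) (j x : Fin n) :
    cgFlip f j x = if x = j then (f j).map (!·) else f x := by
  simp [cgFlip, Function.update_apply]

lemma sub_one_ne_add_one (hn : 3 ≤ n) (i : Fin n) : i - 1 ≠ i + 1 := by
  rw [sub_one_eq]
  have h1 : i + 1 = i + ((1:ℕ) : Fin n) := by push_cast; rfl
  rw [h1, Ne, addCast_inj i (by omega) (by omega)]
  omega

lemma sub_one_ne_self (hn : 3 ≤ n) (i : Fin n) : i - 1 ≠ i := by
  rw [sub_one_eq]
  have h1 : i = i + ((0:ℕ) : Fin n) := by push_cast; rw [add_zero]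
  conv_rhs => rw [h1]
  rw [Ne, addCast_inj i (by omega) (by omega)]
  omega

lemma add_one_ne_self (hn : 3 ≤ n) (i : Fin n) : i + 1 ≠ i := by
  have h0 : i = i + ((0:ℕ) : Fin n) := by push_cast; rw [add_zero]
  have h1 : i + 1 = i + ((1:ℕ) : Fin n) := by push_cast; rfl
  rw [h1]; conv_rhs => rw [h0]
  rw [Ne, addCast_inj i (by omega) (by omega)]
  omega

lemma moveAt_apply_self (hn : 3 ≤ n) (f : Fin n → Option Bool) (i : Fin n) :
    moveAt f i i = none := by
  have h1 := (sub_one_ne_self hn i).symm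
  have h2 := (add_one_ne_self hn i).symm
  simp [moveAt, cgFlip_apply, h1, h2, Function.update_apply]

lemma moveAt_apply_add_one (hn : 3 ≤ n) (f : Fin n → Option Bool) (i : Fin n) :
    moveAt f i (i + 1) = (f (i + 1)).map (!·) := by
  have h1 := (sub_one_ne_add_one hn i).symm
  have h2 := add_one_ne_self hn i
  simp [moveAt, cgFlip_apply, h1, h2, Function.update_apply]

lemma moveAt_apply_sub_one (hn : 3 ≤ n) (f : Fin n → Option Bool) (i : Fin n) :
    moveAt f i (i - 1) = (f (i - 1)).map (!·) := by
  have h1 := sub_one_ne_add_one hn i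
  have h2 := sub_one_ne_self hn i
  simp [moveAt, cgFlip_apply, h1, h2, Function.update_apply]

lemma moveAt_apply_other (f : Fin n → Option Bool) (i x : Fin n)
    (hx1 : x ≠ i - 1) (hx2 : x ≠ i) (hx3 : x ≠ i + 1) :
    moveAt f i x = f x := by
  simp [moveAt, cgFlip_apply, hx1, hx2, hx3, Function.update_apply]

def tI (o : Option Bool) : ZMod 2 := if o = some true then 1 else 0
def vI (o : Option Bool) : ZMod 2 := if o.isSome then 1 else 0

lemma tI_map_not (o : Option Bool) : tI (o.map (!·)) = tI o + vI o := by
  rcases o with _ | b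
  · simp [tI, vI]
  · cases b <;> simp [tI, vI] <;> decide

lemma vI_map_not (o : Option Bool) : vI (o.map (!·)) = vI o := by
  rcases o with _ | b <;> simp [vI]

noncomputable def invar (f : Fin n → Option Bool) : ZMod 2 :=
  (∑ x, tI (f x)) + (∑ x, vI (f x)) + (∑ x, vI (f x) * vI (f (x + 1)))

lemma sum_eq_off (s : Finset (Fin n)) (F G : Fin n → ZMod 2)
    (h : ∀ x ∉ s, F x = G x) :
    ∑ x, F x = (∑ x, G x) + ∑ x ∈ s, (F x - G x) := by
  rw [← Finset.sum_add_sum_compl s F, ← Finset.sum_add_sum_compl s G]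
  have h2 : ∑ x ∈ sᶜ, F x = ∑ x ∈ sᶜ, G x :=
    Finset.sum_congr rfl (fun x hx => h x (Finset.mem_compl.mp hx))
  rw [h2]
  ring_nf
  rw [Finset.sum_sub_distrib]
  ring

lemma vI_moveAt (hn : 3 ≤ n) (f : Fin n → Option Bool) (i x : Fin n) (hx : x ≠ i) :
    vI (moveAt f i x) = vI (f x) := by
  by_cases h1 : x = i - 1
  · subst h1; rw [moveAt_apply_sub_one hn, vI_map_not]
  · by_cases h2 : x = i + 1
    · subst h2; rw [moveAt_apply_add_one hn, vI_map_not]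
    · rw [moveAt_apply_other f i x h1 hx h2]

lemma invar_step (hn : 3 ≤ n) {f g : Fin n → Option Bool} (h : cgStep f g) :
    invar g = invar f := by
  obtain ⟨i, hi, rfl⟩ := h
  show invar (moveAt f i) = invar f
  set g := moveAt f i with hg
  have hne1 := sub_one_ne_add_one hn i
  have hne2 := sub_one_ne_self hn i
  have hne3 := add_one_ne_self hn i
  -- T
  have hT : ∑ x, tI (g x) = (∑ x, tI (f x)) +
      ∑ x ∈ ({i - 1, i, i + 1} : Finset (Fin n)), (tI (g x) - tI (f x)) := by
    apply sum_eq_off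
    intro x hx
    simp only [Finset.mem_insert, Finset.mem_singleton, not_or] at hx
    rw [hg, moveAt_apply_other f i x hx.1 hx.2.1 hx.2.2]
  have hsT : ∑ x ∈ ({i - 1, i, i + 1} : Finset (Fin n)), (tI (g x) - tI (f x)) =
      (vI (f (i-1)) - 1 + vI (f (i+1))) := by
    rw [Finset.sum_insert (by simp [hne1, hne2]), Finset.sum_insert (by simp [hne3.symm]),
      Finset.sum_singleton]
    rw [hg, moveAt_apply_sub_one hn, moveAt_apply_add_one hn, moveAt_apply_self hn,
      tI_map_not, tI_map_not, hi]
    simp [tI]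
    ring_nf
    rw [ZMod.neg_eq_self_mod_two]
  -- V
  have hV : ∑ x, vI (g x) = (∑ x, vI (f x)) +
      ∑ x ∈ ({i} : Finset (Fin n)), (vI (g x) - vI (f x)) := by
    apply sum_eq_off
    intro x hx
    simp only [Finset.mem_singleton] at hx
    exact vI_moveAt hn f i x hx
  have hsV : ∑ x ∈ ({i} : Finset (Fin n)), (vI (g x) - vI (f x)) = -1 := by
    rw [Finset.sum_singleton, hg, moveAt_apply_self hn, hi]
    simp [vI]
  -- E
  have hgi : g i = none := by rw [hg, moveAt_apply_self hn]
  have hE : ∑ x, vI (g x) * vI (g (x + 1)) = (∑ x, vI (f x) * vI (f (x + 1))) +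
      ∑ x ∈ ({i - 1, i} : Finset (Fin n)),
        (vI (g x) * vI (g (x + 1)) - vI (f x) * vI (f (x + 1))) := by
    apply sum_eq_off
    intro x hx
    simp only [Finset.mem_insert, Finset.mem_singleton, not_or] at hx
    have hx1 : x + 1 ≠ i := by
      intro hh; exact hx.1 (by rw [← hh]; ring)
    rw [vI_moveAt hn f i x hx.2, vI_moveAt hn f i (x + 1) hx1]
  have hsE : ∑ x ∈ ({i - 1, i} : Finset (Fin n)),
      (vI (g x) * vI (g (x + 1)) - vI (f x) * vI (f (x + 1))) =
      -(vI (f (i-1))) - vI (f (i+1)) := by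
    rw [Finset.sum_insert (by simp [hne2]), Finset.sum_singleton]
    have e1 : i - 1 + 1 = i := by ring
    rw [e1, hgi, vI_moveAt hn f i (i-1) hne2, vI_moveAt hn f i (i+1) hne3, hi]
    simp [vI]
    exact (congrArg (HAdd.hAdd _) (ZMod.neg_eq_self_mod_two _)).symm.trans (sub_eq_add_neg _ _).symm
  rw [invar, invar, hT, hsT, hV, hsV, hE, hsE]
  have h2 : (2 : ZMod 2) = 0 := by decide
  ring_nf
  rw [show ((-2 : ZMod 2)) = 0 by decide]
  ring
lemma invar_chain (hn : 3 ≤ n) {f g : Fin n → Option Bool}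
    (h : Relation.ReflTransGen cgStep f g) : invar f = invar g := by
  induction h with
  | refl => rfl
  | tail _ hstep ih => rw [ih, invar_step hn hstep]

lemma invar_none : invar (fun _ : Fin n => none) = 0 := by
  simp [invar, tI, vI]

lemma invar_init (A : Fin n → Bool) :
    invar (fun i => some (A i)) = ((Finset.univ.filter fun i => A i = true).card : ZMod 2) := by
  have hT : ∑ x : Fin n, tI (some (A x)) =
      ((Finset.univ.filter fun i => A i = true).card : ZMod 2) := by
    rw [← Finset.sum_boole]
    apply Finset.sum_congr rfl
    intro x _
    simp [tI]
  have hV : ∀ x : Fin n, vI (some (A x)) = 1 := fun x => by simp [vI]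
  rw [invar, hT]
  simp only [hV, one_mul, Finset.sum_const, Finset.card_univ, Fintype.card_fin,
    nsmul_eq_mul, mul_one]
  have : (n : ZMod 2) + (n : ZMod 2) = 0 := by
    have : ((n + n : ℕ) : ZMod 2) = 0 := by
      rw [ZMod.natCast_eq_zero_iff]
      omega
    push_cast at this
    linear_combination this
  rw [add_assoc, this, add_zero]

lemma necessity (hn : 3 ≤ n) (A : Fin n → Bool)
    (h : cgRemovable (fun i => some (A i))) :
    0 < (Finset.univ.filter fun i => A i = true).card ∧
      Even (Finset.univ.filter fun i => A i = true).card := by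
  constructor
  · rcases (Relation.ReflTransGen.cases_head h) with heq | ⟨g, hstep, _⟩
    · exfalso
      have := congrFun heq ⟨0, by omega⟩
      simp at this
    · obtain ⟨i, hi, _⟩ := hstep
      rw [Finset.card_pos]
      exact ⟨i, by simp [Finset.mem_filter]; exact Option.some_injective _ hi⟩
  · have h0 := invar_chain hn h
    rw [invar_none, invar_init] at h0
    rw [even_iff_two_dvd]
    exact (ZMod.natCast_eq_zero_iff _ 2).mp h0
open Classical in
noncomputable def clearOn (f : Fin n → Option Bool) (a : Fin n) (k : ℕ) :
    Fin n → Option Bool :=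
  fun x => if ∃ j, j < k ∧ x = a + (j : Fin n) then none else f x

lemma clearOn_mem {f : Fin n → Option Bool} {a : Fin n} {k j : ℕ} (hj : j < k) :
    clearOn f a k (a + (j : Fin n)) = none := by
  rw [clearOn, if_pos ⟨j, hj, rfl⟩]

lemma clearOn_not_mem {f : Fin n → Option Bool} {a : Fin n} {k : ℕ} {x : Fin n}
    (h : ∀ j, j < k → x ≠ a + (j : Fin n)) :
    clearOn f a k x = f x := by
  rw [clearOn, if_neg]
  rintro ⟨j, hj, rfl⟩
  exact h j hj rfl

lemma clearOn_zero (f : Fin n → Option Bool) (a : Fin n) : clearOn f a 0 = f := by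
  funext x
  exact clearOn_not_mem (by omega)

noncomputable def headsS (f : Fin n → Option Bool) (a : Fin n) (k : ℕ) : ZMod 2 :=
  ∑ j ∈ Finset.range k, tI (f (a + (j : Fin n)))

lemma opt_some_false {o : Option Bool} (h1 : o.isSome) (h2 : o ≠ some true) :
    o = some false := by
  rcases o with _ | b
  · simp at h1
  · cases b
    · rfl
    · simp at h2

lemma isSome_map_not {o : Option Bool} (h : o.isSome) : (o.map (!·)).isSome := by
  rcases o with _ | b <;> simp at h ⊢

lemma clearArc (hn : 3 ≤ n) :
    ∀ k : ℕ, ∀ (f : Fin n → Option Bool) (a : Fin n), k + 1 ≤ n →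
    (∀ j, j < k → (f (a + (j : Fin n))).isSome) →
    f (a - 1) = none → f (a + (k : Fin n)) = none →
    (headsS f a k = 1 ∨ k = 0) →
    Relation.ReflTransGen cgStep f (clearOn f a k) := by
  intro k
  induction k using Nat.strong_induction_on with
  | _ k IH =>
  intro f a hk hsome hbl hbr hS
  rcases Nat.eq_zero_or_pos k with hk0 | hkpos
  · subst hk0
    rw [clearOn_zero]
  have hS1 : headsS f a k = 1 := by
    rcases hS with h | h
    · exact h
    · omega
  -- there is a head in the arc
  have hex : ∃ j, j < k ∧ f (a + (j : Fin n)) = some true := by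
    by_contra hc
    push_neg at hc
    have : headsS f a k = 0 := by
      apply Finset.sum_eq_zero
      intro j hj
      rw [Finset.mem_range] at hj
      have := hc j hj
      rw [tI, if_neg this]
    rw [this] at hS1
    exact absurd hS1 (by decide)
  obtain ⟨j₀, hj₀k, hj₀head, hmin⟩ :
      ∃ j₀, j₀ < k ∧ f (a + (j₀ : Fin n)) = some true ∧
        ∀ j, j < j₀ → f (a + (j : Fin n)) = some false := by
    refine ⟨Nat.find hex, (Nat.find_spec hex).1, (Nat.find_spec hex).2, ?_⟩
    intro j hj
    have h1 := Nat.find_min hex hj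
    push_neg at h1
    have hjk : j < k := lt_trans hj (Nat.find_spec hex).1
    exact opt_some_false (hsome j hjk) (h1 hjk)
  set i := a + (j₀ : Fin n) with hidef
  set g := moveAt f i with hgdef
  -- cast arithmetic for positions
  have hadd : ∀ p q : ℕ, a + ((p + q : ℕ) : Fin n) = a + (p : Fin n) + (q : Fin n) := by
    intro p q; push_cast; ring
  have hi1 : i + 1 = a + ((j₀ + 1 : ℕ) : Fin n) := by
    rw [hadd]; push_cast; ring
  have hisub : 1 ≤ j₀ → i - 1 = a + ((j₀ - 1 : ℕ) : Fin n) := by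
    intro h
    rw [sub_eq_iff_eq_add, hidef]
    have h2 : ((j₀ : ℕ) : Fin n) = ((j₀ - 1 : ℕ) : Fin n) + 1 := by
      conv_lhs => rw [show j₀ = (j₀ - 1) + 1 by omega]
      push_cast
      ring
    rw [h2, add_assoc]
  have ha1 : a - 1 = a + ((n - 1 : ℕ) : Fin n) := sub_one_eq a
  have hinj : ∀ p q : ℕ, p < n → q < n →
      (a + (p : Fin n) = a + (q : Fin n) ↔ p = q) := fun p q hp hq => addCast_inj a hp hq
  -- g outside the arc
  have hg_out : ∀ x : Fin n, (∀ j, j < k → x ≠ a + (j : Fin n)) → g x = f x := by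
    intro x hx
    by_cases hx2 : x = i
    · exact absurd hx2 (hx j₀ hj₀k)
    by_cases hx3 : x = i + 1
    · subst hx3
      rw [hgdef, moveAt_apply_add_one hn]
      rcases Nat.lt_or_ge (j₀ + 1) k with h | h
      · exact absurd (by rw [hi1]) (hx (j₀+1) h)
      · have hk' : j₀ + 1 = k := by omega
        have : i + 1 = a + (k : Fin n) := by rw [hi1, hk']
        rw [this, hbr]
        rfl
    by_cases hx1 : x = i - 1
    · subst hx1
      rw [hgdef, moveAt_apply_sub_one hn]
      rcases Nat.eq_zero_or_pos j₀ with h0 | h0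
      · have : i - 1 = a - 1 := by rw [hidef, h0]; push_cast; rw [add_zero]
        rw [this, hbl]
        rfl
      · exact absurd (hisub h0) (hx (j₀ - 1) (by omega))
    · exact hgdef ▸ moveAt_apply_other f i x hx1 hx2 hx3
  -- g inside the arc, away from the action
  have hg_mid : ∀ j, j < k → j ≠ j₀ → j ≠ j₀ + 1 → (1 ≤ j₀ → j ≠ j₀ - 1) →
      g (a + (j : Fin n)) = f (a + (j : Fin n)) := by
    intro j hj h1 h2 h3
    apply moveAt_apply_other
    · rcases Nat.eq_zero_or_pos j₀ with h0 | h0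
      · have : i - 1 = a - 1 := by rw [hidef, h0]; push_cast; rw [add_zero]
        rw [this, ha1, Ne, hinj j (n-1) (by omega) (by omega)]
        omega
      · rw [hisub h0, Ne, hinj j (j₀ - 1) (by omega) (by omega)]
        exact h3 h0
    · rw [hidef, Ne, hinj j j₀ (by omega) (by omega)]; exact h1
    · rw [hi1, Ne, hinj j (j₀+1) (by omega) (by omega)]; exact h2
  have hgi : g i = none := hgdef ▸ moveAt_apply_self hn f i
  -- boundary values of g
  have hgbl : g (a - 1) = none := by
    rw [hg_out (a - 1) ?_, hbl]
    intro j hj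
    rw [ha1, Ne, hinj (n-1) j (by omega) (by omega)]
    omega
  have hgbr : g (a + (k : Fin n)) = none := by
    rw [hg_out _ ?_, hbr]
    intro j hj
    rw [Ne, hinj k j (by omega) (by omega)]
    omega
  -- step 1: the move
  have step1 : cgStep f g := cgStep_moveAt hj₀head
  -- the right arc
  obtain ⟨k', hk'def⟩ : ∃ k', k' = k - (j₀ + 1) := ⟨_, rfl⟩
  obtain ⟨a', ha'def⟩ : ∃ a' : Fin n, a' = i + 1 := ⟨_, rfl⟩
  have ha'e : ∀ j : ℕ, a' + (j : Fin n) = a + ((j₀ + 1 + j : ℕ) : Fin n) := by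
    intro j
    rw [ha'def, hadd, ← hi1]
  -- sum bookkeeping
  have hTsplit : (∑ j ∈ Finset.range j₀, tI (f (a + (j : Fin n)))) + tI (f i) +
      (∑ j ∈ Finset.range k', tI (f (a' + (j : Fin n)))) = 1 := by
    have e1 : ∑ j ∈ Finset.range k', tI (f (a' + (j : Fin n))) =
        ∑ j ∈ Finset.Ico (j₀+1) k, tI (f (a + (j : Fin n))) := by
      rw [hk'def, Finset.sum_Ico_eq_sum_range]
      apply Finset.sum_congr rfl
      intro j _
      rw [ha'e]
    have e2 : (∑ j ∈ Finset.range (j₀+1), tI (f (a + (j : Fin n)))) +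
        ∑ j ∈ Finset.Ico (j₀+1) k, tI (f (a + (j : Fin n))) = headsS f a k := by
      have h1 := Finset.sum_Ico_consecutive (fun j => tI (f (a + (j : Fin n))))
        (by omega : 0 ≤ j₀ + 1) (by omega : j₀ + 1 ≤ k)
      rw [headsS, Finset.range_eq_Ico]
      rw [Finset.range_eq_Ico]
      exact h1
    rw [e1, ← hS1, ← e2, Finset.sum_range_succ, hidef]
  have hzero : ∑ j ∈ Finset.range j₀, tI (f (a + (j : Fin n))) = 0 := by
    apply Finset.sum_eq_zero
    intro j hj
    rw [Finset.mem_range] at hj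
    rw [hmin j hj, tI]
    simp
  have hone : tI (f i) = 1 := by simp [tI, hj₀head]
  -- right arc hypotheses
  have hsome' : ∀ j, j < k' → (g (a' + (j : Fin n))).isSome := by
    intro j hj
    rcases Nat.eq_zero_or_pos j with h0 | h0
    · subst h0
      have : a' + ((0:ℕ) : Fin n) = i + 1 := by push_cast; rw [add_zero]; exact ha'def
      rw [this, hgdef, moveAt_apply_add_one hn]
      have hfs : (f (i + 1)).isSome := by
        rw [hi1]; exact hsome (j₀+1) (by omega)
      exact isSome_map_not hfs
    · rw [ha'e, hg_mid (j₀ + 1 + j) (by omega) (by omega) (by omega) (by omega)]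
      exact hsome (j₀ + 1 + j) (by omega)
  have hbl' : g (a' - 1) = none := by
    have : a' - 1 = i := by rw [ha'def]; ring
    rw [this, hgi]
  have hbr' : g (a' + (k' : Fin n)) = none := by
    rcases Nat.lt_or_ge (j₀ + 1) k with h | h
    · rw [ha'e]
      have : j₀ + 1 + k' = k := by omega
      rw [this, hgbr]
    · have hkk : k' = 0 := by omega
      have hjj : j₀ + 1 = k := by omega
      rw [hkk]
      have : a' + ((0:ℕ) : Fin n) = i + 1 := by push_cast; rw [add_zero]; exact ha'def
      rw [this, hgdef, moveAt_apply_add_one hn]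
      have : i + 1 = a + (k : Fin n) := by rw [hi1, hjj]
      rw [this, hbr]
      rfl
  have hSr : headsS g a' k' = 1 ∨ k' = 0 := by
    rcases Nat.eq_zero_or_pos k' with h0 | h0
    · exact Or.inr h0
    left
    have e0 : a' + ((0:ℕ) : Fin n) = i + 1 := by push_cast; rw [add_zero]; exact ha'def
    have hfl : tI (g (i + 1)) = tI (f (i + 1)) + 1 := by
      rw [hgdef, moveAt_apply_add_one hn, tI_map_not]
      have : (f (i+1)).isSome := by rw [hi1]; exact hsome (j₀+1) (by omega)
      rw [vI, if_pos this]
    have hrest : ∀ j, 1 ≤ j → j < k' →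
        tI (g (a' + (j : Fin n))) = tI (f (a' + (j : Fin n))) := by
      intro j h1 h2
      rw [ha'e, hg_mid (j₀ + 1 + j) (by omega) (by omega) (by omega) (by omega), ← ha'e]
    have hsplit2 : ∀ (h : Fin n → Option Bool), headsS h a' k' =
        tI (h (a' + ((0:ℕ) : Fin n))) + ∑ j ∈ Finset.Ico 1 k', tI (h (a' + (j : Fin n))) := by
      intro h
      have h1 := Finset.sum_Ico_consecutive (fun j => tI (h (a' + (j : Fin n))))
        (by omega : 0 ≤ 1) (by omega : 1 ≤ k')
      rw [headsS, Finset.range_eq_Ico, ← h1]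
      congr 1
      rw [show Finset.Ico 0 1 = Finset.range 1 from (Finset.range_eq_Ico 1).symm,
        Finset.sum_range_one]
    have hfsum : headsS f a' k' = 1 - tI (f i) - 0 := by
      have h2 := hTsplit
      rw [hzero] at h2
      rw [headsS]
      linear_combination h2
    rw [hsplit2 g, e0, hfl, ← e0]
    have : ∑ j ∈ Finset.Ico 1 k', tI (g (a' + (j : Fin n))) =
        ∑ j ∈ Finset.Ico 1 k', tI (f (a' + (j : Fin n))) := by
      apply Finset.sum_congr rfl
      intro j hj
      rw [Finset.mem_Ico] at hj
      exact hrest j hj.1 hj.2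
    rw [this]
    have := hsplit2 f
    rw [hfsum, hone] at this
    have h2 : (1:ZMod 2) - 1 - 0 = 0 := by decide
    rw [h2] at this
    have h3 : ∑ j ∈ Finset.Ico 1 k', tI (f (a' + (j : Fin n))) =
        - tI (f (a' + ((0:ℕ) : Fin n))) := by linear_combination this.symm
    rw [h3]
    ring
  -- apply IH to the right arc
  have step2 : Relation.ReflTransGen cgStep g (clearOn g a' k') :=
    IH k' (by omega) g a' (by omega) hsome' hbl' hbr' hSr
  set f₂ := clearOn g a' k' with hf₂def
  -- positions in the left arc (and boundaries) are untouched by the right clear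
  have hf₂left : ∀ j, j < j₀ → f₂ (a + (j : Fin n)) = g (a + (j : Fin n)) := by
    intro j hj
    apply clearOn_not_mem
    intro j' hj'
    rw [ha'e, Ne, hinj j (j₀ + 1 + j') (by omega) (by omega)]
    omega
  have hf₂i : f₂ i = none := by
    rw [hf₂def, hidef]
    rw [clearOn_not_mem ?_]
    · rw [← hidef, hgi]
    · intro j' hj'
      rw [ha'e, Ne, hinj j₀ (j₀ + 1 + j') (by omega) (by omega)]
      omega
  -- left arc hypotheses
  have hlsome : ∀ j, j < j₀ → (f₂ (a + (j : Fin n))).isSome := by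
    intro j hj
    rw [hf₂left j hj]
    rcases Nat.lt_or_ge j (j₀ - 1) with h | h
    · rw [hg_mid j (by omega) (by omega) (by omega) (by omega), hmin j hj]
      rfl
    · have hj1 : j = j₀ - 1 := by omega
      have h1 : 1 ≤ j₀ := by omega
      subst hj1
      rw [← hisub h1, hgdef, moveAt_apply_sub_one hn, hisub h1]
      exact isSome_map_not (hsome (j₀-1) (by omega))
  have hlbl : f₂ (a - 1) = none := by
    rw [hf₂def, clearOn_not_mem ?_, hgbl]
    intro j' hj'
    rw [ha'e, ha1, Ne, hinj (n-1) (j₀ + 1 + j') (by omega) (by omega)]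
    omega
  have hlbr : f₂ (a + (j₀ : Fin n)) = none := hidef ▸ hf₂i
  have hSl : headsS f₂ a j₀ = 1 ∨ j₀ = 0 := by
    rcases Nat.eq_zero_or_pos j₀ with h0 | h0
    · exact Or.inr h0
    left
    rw [headsS]
    rw [Finset.sum_eq_single (j₀ - 1)]
    · rw [hf₂left (j₀-1) (by omega), ← hisub h0, hgdef, moveAt_apply_sub_one hn,
        hisub h0, hmin (j₀ - 1) (by omega)]
      rfl
    · intro j hj hne
      rw [Finset.mem_range] at hj
      rw [hf₂left j hj, hg_mid j (by omega) (by omega) (by omega) (fun _ => hne), hmin j hj]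
      rfl
    · intro h
      rw [Finset.mem_range] at h
      omega
  have step3 : Relation.ReflTransGen cgStep f₂ (clearOn f₂ a j₀) :=
    IH j₀ hj₀k f₂ a (by omega) hlsome hlbl hlbr hSl
  -- the final configuration is the full clear
  have hfinal : clearOn f₂ a j₀ = clearOn f a k := by
    funext x
    by_cases hx : ∃ j, j < k ∧ x = a + (j : Fin n)
    · obtain ⟨j, hj, rfl⟩ := hx
      rw [clearOn_mem hj]
      rcases Nat.lt_or_ge j j₀ with h | h
      · rw [clearOn_mem h]
      rcases Nat.eq_or_lt_of_le h with h1 | h1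
      · rw [clearOn_not_mem ?_]
        · rw [← h1, ← hidef, hf₂i]
        · intro j' hj'
          rw [Ne, hinj j j' (by omega) (by omega)]
          omega
      · rw [clearOn_not_mem ?_]
        · rw [hf₂def]
          have : a + (j : Fin n) = a' + ((j - (j₀+1) : ℕ) : Fin n) := by
            rw [ha'e]
            congr 2
            omega
          rw [this, clearOn_mem (by omega)]
        · intro j' hj'
          rw [Ne, hinj j j' (by omega) (by omega)]
          omega
    · push_neg at hx
      rw [clearOn_not_mem (fun j hj => hx j hj)]
      rw [clearOn_not_mem (fun j hj => hx j (by omega))]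
      rw [hf₂def, clearOn_not_mem ?_]
      · exact hg_out x hx
      · intro j' hj'
        rw [ha'e]
        exact hx (j₀ + 1 + j') (by omega)
  rw [← hfinal]
  exact Relation.ReflTransGen.head step1 (Relation.ReflTransGen.trans step2 step3)

lemma sum_tI_card (A : Fin n → Bool) :
    ∑ x : Fin n, tI (some (A x)) =
      ((Finset.univ.filter fun i => A i = true).card : ZMod 2) := by
  rw [← Finset.sum_boole]
  apply Finset.sum_congr rfl
  intro x _
  simp [tI]

lemma sufficiency (hn : 3 ≤ n) (A : Fin n → Bool)
    (hpos : 0 < (Finset.univ.filter fun i => A i = true).card)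
    (heven : Even (Finset.univ.filter fun i => A i = true).card) :
    cgRemovable (fun i => some (A i)) := by
  obtain ⟨i, hi⟩ : ∃ i, A i = true := by
    rw [Finset.card_pos] at hpos
    obtain ⟨i, hi⟩ := hpos
    exact ⟨i, (Finset.mem_filter.mp hi).2⟩
  set f₀ : Fin n → Option Bool := fun x => some (A x) with hf₀def
  set g := moveAt f₀ i with hgdef
  have step1 : cgStep f₀ g := cgStep_moveAt (by rw [hf₀def]; simp [hi])
  set a := i + 1 with hadef
  have hadd : ∀ p q : ℕ, a + ((p + q : ℕ) : Fin n) = a + (p : Fin n) + (q : Fin n) := by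
    intro p q; push_cast; ring
  have hinj : ∀ p q : ℕ, p < n → q < n →
      (a + (p : Fin n) = a + (q : Fin n) ↔ p = q) := fun p q hp hq => addCast_inj a hp hq
  have hA1 : a - 1 = i := by rw [hadef]; ring
  have hA2 : a + ((n - 1 : ℕ) : Fin n) = i := by
    have h0 : ((n : ℕ) : Fin n) = 0 := Fin.natCast_self n
    calc a + ((n - 1 : ℕ) : Fin n) = i + ((1 + (n-1) : ℕ) : Fin n) := by
          rw [hadef]; push_cast; ring
      _ = i + ((n : ℕ) : Fin n) := by rw [show 1 + (n-1) = n by omega]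
      _ = i := by rw [h0, add_zero]
  have hA3 : a + ((n - 2 : ℕ) : Fin n) = i - 1 := by
    rw [sub_one_eq i]
    calc a + ((n - 2 : ℕ) : Fin n) = i + ((1 + (n-2) : ℕ) : Fin n) := by
          rw [hadef]; push_cast; ring
      _ = i + ((n - 1 : ℕ) : Fin n) := by rw [show 1 + (n-2) = n - 1 by omega]
  have hA0 : a + ((0 : ℕ) : Fin n) = i + 1 := by rw [hadef]; push_cast; rw [add_zero]
  have hgi : g i = none := hgdef ▸ moveAt_apply_self hn f₀ i
  -- hypotheses of clearArc
  have hsome : ∀ j, j < n - 1 → (g (a + (j : Fin n))).isSome := by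
    intro j hj
    have hxi : a + (j : Fin n) ≠ i := by
      rw [← hA2, Ne, hinj j (n-1) (by omega) (by omega)]
      omega
    by_cases h1 : a + (j : Fin n) = i - 1
    · rw [h1, hgdef, moveAt_apply_sub_one hn]
      exact isSome_map_not (by rw [hf₀def]; rfl)
    by_cases h2 : a + (j : Fin n) = i + 1
    · rw [h2, hgdef, moveAt_apply_add_one hn]
      exact isSome_map_not (by rw [hf₀def]; rfl)
    · rw [hgdef, moveAt_apply_other f₀ i _ h1 hxi h2, hf₀def]
      rfl
  have hbl : g (a - 1) = none := by rw [hA1, hgi]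
  have hbr : g (a + ((n - 1 : ℕ) : Fin n)) = none := by rw [hA2, hgi]
  have hhs : headsS g a (n - 1) = 1 := by
    have hterm : ∀ j, j < n - 1 → tI (g (a + (j : Fin n))) =
        tI (f₀ (a + (j : Fin n))) + (if j = 0 then 1 else 0) +
          (if j = n - 2 then 1 else 0) := by
      intro j hj
      rcases Nat.eq_zero_or_pos j with h0 | h0
      · subst h0
        rw [hA0, hgdef, moveAt_apply_add_one hn, tI_map_not, ← hA0]
        have hv : vI (f₀ (a + ((0:ℕ) : Fin n))) = 1 := by rw [hf₀def]; rfl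
        rw [hv, if_pos rfl, if_neg (by omega)]
        ring
      by_cases h2 : j = n - 2
      · subst h2
        rw [hA3, hgdef, moveAt_apply_sub_one hn, tI_map_not, ← hA3]
        have hv : vI (f₀ (a + ((n-2:ℕ) : Fin n))) = 1 := by rw [hf₀def]; rfl
        rw [hv, if_pos rfl, if_neg (by omega)]
        ring
      · rw [hgdef, moveAt_apply_other f₀ i _ ?_ ?_ ?_, if_neg (by omega), if_neg h2]
        · ring
        · rw [← hA3, Ne, hinj j (n-2) (by omega) (by omega)]; exact h2
        · rw [← hA2, Ne, hinj j (n-1) (by omega) (by omega)]; omega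
        · rw [← hA0, Ne, hinj j 0 (by omega) (by omega)]; omega
    have hsum1 : headsS g a (n-1) =
        (∑ j ∈ Finset.range (n-1), tI (f₀ (a + (j : Fin n)))) +
        (∑ j ∈ Finset.range (n-1), (if j = 0 then (1:ZMod 2) else 0)) +
        (∑ j ∈ Finset.range (n-1), (if j = n-2 then (1:ZMod 2) else 0)) := by
      rw [headsS, ← Finset.sum_add_distrib, ← Finset.sum_add_distrib]
      apply Finset.sum_congr rfl
      intro j hj
      rw [Finset.mem_range] at hj
      exact hterm j hj
    have hone1 : (∑ j ∈ Finset.range (n-1), (if j = 0 then (1:ZMod 2) else 0)) = 1 := by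
      rw [Finset.sum_ite_eq' (Finset.range (n-1)) 0 (fun _ => (1:ZMod 2))]
      rw [if_pos (Finset.mem_range.mpr (by omega))]
    have hone2 : (∑ j ∈ Finset.range (n-1), (if j = n-2 then (1:ZMod 2) else 0)) = 1 := by
      rw [Finset.sum_ite_eq' (Finset.range (n-1)) (n-2) (fun _ => (1:ZMod 2))]
      rw [if_pos (Finset.mem_range.mpr (by omega))]
    have hfull : (∑ j ∈ Finset.range n, tI (f₀ (a + (j : Fin n)))) =
        (∑ j ∈ Finset.range (n-1), tI (f₀ (a + (j : Fin n)))) + tI (f₀ (a + ((n-1:ℕ) : Fin n))) := by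
      have hrn : Finset.range ((n-1)+1) = Finset.range n := by congr 1; omega
      rw [← hrn]
      exact Finset.sum_range_succ _ _
    have htrans : (∑ j ∈ Finset.range n, tI (f₀ (a + (j : Fin n)))) =
        ((Finset.univ.filter fun i => A i = true).card : ZMod 2) := by
      rw [← Fin.sum_univ_eq_sum_range (fun j => tI (f₀ (a + (j : Fin n)))) n]
      have e1 : ∀ x : Fin n, tI (f₀ (a + ((x.val : ℕ) : Fin n))) = tI (f₀ (a + x)) := by
        intro x
        rw [Fin.cast_val_eq_self]
      rw [Finset.sum_congr rfl (fun x _ => e1 x)]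
      have e2 : ∑ x : Fin n, tI (f₀ (a + x)) = ∑ x : Fin n, tI (f₀ x) :=
        Fintype.sum_equiv (Equiv.addLeft a) _ _ (fun x => by simp [Equiv.addLeft])
      rw [e2, hf₀def]
      exact sum_tI_card A
    have hcard0 : ((Finset.univ.filter fun i => A i = true).card : ZMod 2) = 0 := by
      rw [ZMod.natCast_eq_zero_iff]
      exact even_iff_two_dvd.mp heven
    have hlast : tI (f₀ (a + ((n-1:ℕ) : Fin n))) = 1 := by
      rw [hA2, hf₀def]
      simp [tI, hi]
    rw [hsum1, hone1, hone2]
    have h5 : (∑ j ∈ Finset.range (n-1), tI (f₀ (a + (j : Fin n)))) + 1 = 0 := by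
      rw [← hlast, ← hfull, htrans, hcard0]
    have h6 : (∑ j ∈ Finset.range (n-1), tI (f₀ (a + (j : Fin n)))) = -1 := by
      linear_combination h5
    rw [h6]
    decide
  have step2 : Relation.ReflTransGen cgStep g (clearOn g a (n-1)) :=
    clearArc hn (n-1) g a (by omega) hsome hbl hbr (Or.inl hhs)
  have hfinal : clearOn g a (n-1) = (fun _ : Fin n => none) := by
    funext x
    have hx : x = a + (((x - a).val : ℕ) : Fin n) := by
      rw [Fin.cast_val_eq_self, add_sub_cancel]
    rcases Nat.lt_or_ge (x - a).val (n-1) with h | h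
    · rw [hx, clearOn_mem h]
    · have hd : (x - a).val = n - 1 := by
        have := (x - a).isLt
        omega
      rw [hx, hd, clearOn_not_mem ?_]
      · rw [hA2, hgi]
      · intro j hj
        rw [Ne, hinj (n-1) j (by omega) (by omega)]
        omega
  rw [cgRemovable, ← hfinal]
  exact Relation.ReflTransGen.head step1 step2
end CG

/-- For `n ≥ 3`, a circular arrangement of `n` coins (with gaps) is removable
iff the number of heads-up coins is positive and even. -/
theorem circular_gaps_removable_iff (m : ℕ) (A : Fin (m + 3) → Bool) :
    cgRemovable (fun i => some (A i)) ↔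
      (0 < (Finset.univ.filter fun i => A i = true).card ∧
        Even (Finset.univ.filter fun i => A i = true).card) := by

  have hn : 3 ≤ m + 3 := by omega
  constructor
  · exact CG.necessity hn A
  · rintro ⟨h1, h2⟩
    exact CG.sufficiency hn A h1 h2
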